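/- Under the stated hypotheses with V² > 0, the interior dihedral angles θ̄′_hk := arccos(−C′_hk/(16 |A′_h| |A′_k|)) of the primed (Lorentzian, timelike-faced) tetrahedron satisfy, at the bottom vertex 3 and the top vertex 1: θ̄′₁₂ + θ̄′₁₄ + θ̄′₂₄ < π and θ̄′₂₃ + θ̄′₂₄ + θ̄′₃₄ < π. -/

import Mathlib

set_option maxHeartbeats 1000000


open Real

/-- Heron's formula for the squared area of a triangle with sides `x, y, z`. -/
noncomputable def heron (x y z : ℝ) : ℝ :=
  (1/16) * (x + y + z) * (-x + y + z) * (x - y + z) * (x + y - z)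

/-- The 5×5 Cayley matrix of a tetrahedron with edge lengths
`J = (j₁₂, j₁₃, j₁₄, j₃₄, j₂₄, j₂₃)` (edge `(h,k)` joins the two vertices
other than `h` and `k`). -/
noncomputable def cayley (J : Fin 6 → ℝ) : Matrix (Fin 5) (Fin 5) ℝ :=
  !![0,         (J 3)^2, (J 4)^2, (J 5)^2, 1;
     (J 3)^2,   0,       (J 2)^2, (J 1)^2, 1;
     (J 4)^2,   (J 2)^2, 0,       (J 0)^2, 1;
     (J 5)^2,   (J 1)^2, (J 0)^2, 0,       1;
     1,         1,       1,       1,       0]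

/-- The `(r,s)` cofactor `C_rs` of the Cayley matrix (vertices `r, s ∈ {1,…,4}`
correspond to indices `r−1, s−1 : Fin 5`). -/
noncomputable def cof (J : Fin 6 → ℝ) (r s : Fin 5) : ℝ :=
  (-1 : ℝ) ^ ((r : ℕ) + (s : ℕ)) *
    ((cayley J).submatrix r.succAbove s.succAbove).det

/-- Squared areas of the four faces: `A_h²` is the squared area of the face
obtained by deleting vertex `h` (index `h−1 : Fin 5`). -/
noncomputable def Asq (J : Fin 6 → ℝ) : Fin 5 → ℝ :=
  ![heron (J 0) (J 1) (J 2), heron (J 0) (J 4) (J 5),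
    heron (J 1) (J 3) (J 5), heron (J 2) (J 3) (J 4), 0]

/-- The exterior dihedral angle `θ_hk = arccos(−C_hk/(16 A_h A_k))` of a
Euclidean tetrahedron. -/
noncomputable def thetaE (J : Fin 6 → ℝ) (r s : Fin 5) : ℝ :=
  arccos (-(cof J r s) / (16 * Real.sqrt (Asq J r) * Real.sqrt (Asq J s)))

/-- The exterior dihedral angle `θ′_hk = arccos(C′_hk/(16 |A′_h| |A′_k|))` of a
Lorentzian tetrahedron with timelike faces (`A′_h² < 0`, `|A′_h| = √(−A′_h²)`). -/
noncomputable def thetaL (J : Fin 6 → ℝ) (r s : Fin 5) : ℝ :=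
  arccos (cof J r s / (16 * Real.sqrt (-(Asq J r)) * Real.sqrt (-(Asq J s))))

/-- `(x,y,z)` satisfies strict triangle inequalities. -/
def StrictTri (x y z : ℝ) : Prop := x + y > z ∧ y + z > x ∧ x + z > y

/-- `(x,y,z)` satisfies the SU(1,1) (anti-triangle) inequalities
`z ≥ x+y+1`, `x < y+z`, `y < x+z`. -/
def AntiTri (x y z : ℝ) : Prop := z ≥ x + y + 1 ∧ x < y + z ∧ y < x + z

/-- The interior dihedral angle `θ̄′_hk = arccos(−C′_hk/(16 |A′_h| |A′_k|))` of a
Lorentzian tetrahedron with timelike faces (`A′_h² < 0`, `|A′_h| = √(−A′_h²)`). -/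
noncomputable def thetaLint (J : Fin 6 → ℝ) (r s : Fin 5) : ℝ :=
  arccos (-(cof J r s) / (16 * Real.sqrt (-(Asq J r)) * Real.sqrt (-(Asq J s))))

lemma detP (J : Fin 6 → ℝ) : (cayley J).det = (-2)*(J 2)^2*(J 5)^(4) + 2*(J 2)^2*(J 4)^2*(J 5)^2 + 2*(J 2)^2*(J 3)^2*(J 5)^2 + (-2)*(J 2)^2*(J 3)^2*(J 4)^2 + (-2)*(J 2)^(4)*(J 5)^2 + 2*(J 1)^2*(J 4)^2*(J 5)^2 + (-2)*(J 1)^2*(J 4)^(4) + (-2)*(J 1)^2*(J 3)^2*(J 5)^2 + 2*(J 1)^2*(J 3)^2*(J 4)^2 + 2*(J 1)^2*(J 2)^2*(J 5)^2 + 2*(J 1)^2*(J 2)^2*(J 4)^2 + (-2)*(J 1)^(4)*(J 4)^2 + (-2)*(J 0)^2*(J 4)^2*(J 5)^2 + 2*(J 0)^2*(J 3)^2*(J 5)^2 + 2*(J 0)^2*(J 3)^2*(J 4)^2 + (-2)*(J 0)^2*(J 3)^(4) + 2*(J 0)^2*(J 2)^2*(J 5)^2 + 2*(J 0)^2*(J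 2)^2*(J 3)^2 + 2*(J 0)^2*(J 1)^2*(J 4)^2 + 2*(J 0)^2*(J 1)^2*(J 3)^2 + (-2)*(J 0)^2*(J 1)^2*(J 2)^2 + (-2)*(J 0)^(4)*(J 3)^2 := by
  simp (config := {decide := true}) [cayley, Matrix.det_succ_row_zero, Fin.sum_univ_succ,
    Matrix.submatrix_apply, Fin.succAbove]
  ring

lemma cofP00 (J : Fin 6 → ℝ) : cof J 0 0 = (J 2)^(4) + (-2)*(J 1)^2*(J 2)^2 + (J 1)^(4) + (-2)*(J 0)^2*(J 2)^2 + (-2)*(J 0)^2*(J 1)^2 + (J 0)^(4) := by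
  have h : (cayley J).submatrix ((0:Fin 5).succAbove) ((0:Fin 5).succAbove) =
      !![0, (J 2)^2, (J 1)^2, 1; (J 2)^2, 0, (J 0)^2, 1; (J 1)^2, (J 0)^2, 0, 1; 1, 1, 1, 0] := by
    ext i j
    fin_cases i <;> fin_cases j <;> rfl
  rw [cof, h]
  simp (config := {decide := true}) [Matrix.det_succ_row_zero, Fin.sum_univ_succ, Fin.succAbove,
    (show (((0:Fin 5)):ℕ) = 0 from rfl), (show (((1:Fin 5)):ℕ) = 1 from rfl),
    (show (((2:Fin 5)):ℕ) = 2 from rfl), (show (((3:Fin 5)):ℕ) = 3 from rfl)]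
  ring

lemma cofP11 (J : Fin 6 → ℝ) : cof J 1 1 = (J 5)^(4) + (-2)*(J 4)^2*(J 5)^2 + (J 4)^(4) + (-2)*(J 0)^2*(J 5)^2 + (-2)*(J 0)^2*(J 4)^2 + (J 0)^(4) := by
  have h : (cayley J).submatrix ((1:Fin 5).succAbove) ((1:Fin 5).succAbove) =
      !![0, (J 4)^2, (J 5)^2, 1; (J 4)^2, 0, (J 0)^2, 1; (J 5)^2, (J 0)^2, 0, 1; 1, 1, 1, 0] := by
    ext i j
    fin_cases i <;> fin_cases j <;> rfl
  rw [cof, h]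
  simp (config := {decide := true}) [Matrix.det_succ_row_zero, Fin.sum_univ_succ, Fin.succAbove,
    (show (((0:Fin 5)):ℕ) = 0 from rfl), (show (((1:Fin 5)):ℕ) = 1 from rfl),
    (show (((2:Fin 5)):ℕ) = 2 from rfl), (show (((3:Fin 5)):ℕ) = 3 from rfl)]
  ring

lemma cofP22 (J : Fin 6 → ℝ) : cof J 2 2 = (J 5)^(4) + (-2)*(J 3)^2*(J 5)^2 + (J 3)^(4) + (-2)*(J 1)^2*(J 5)^2 + (-2)*(J 1)^2*(J 3)^2 + (J 1)^(4) := by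
  have h : (cayley J).submatrix ((2:Fin 5).succAbove) ((2:Fin 5).succAbove) =
      !![0, (J 3)^2, (J 5)^2, 1; (J 3)^2, 0, (J 1)^2, 1; (J 5)^2, (J 1)^2, 0, 1; 1, 1, 1, 0] := by
    ext i j
    fin_cases i <;> fin_cases j <;> rfl
  rw [cof, h]
  simp (config := {decide := true}) [Matrix.det_succ_row_zero, Fin.sum_univ_succ, Fin.succAbove,
    (show (((0:Fin 5)):ℕ) = 0 from rfl), (show (((1:Fin 5)):ℕ) = 1 from rfl),
    (show (((2:Fin 5)):ℕ) = 2 from rfl), (show (((3:Fin 5)):ℕ) = 3 from rfl)]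
  ring

lemma cofP33 (J : Fin 6 → ℝ) : cof J 3 3 = (J 4)^(4) + (-2)*(J 3)^2*(J 4)^2 + (J 3)^(4) + (-2)*(J 2)^2*(J 4)^2 + (-2)*(J 2)^2*(J 3)^2 + (J 2)^(4) := by
  have h : (cayley J).submatrix ((3:Fin 5).succAbove) ((3:Fin 5).succAbove) =
      !![0, (J 3)^2, (J 4)^2, 1; (J 3)^2, 0, (J 2)^2, 1; (J 4)^2, (J 2)^2, 0, 1; 1, 1, 1, 0] := by
    ext i j
    fin_cases i <;> fin_cases j <;> rfl
  rw [cof, h]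
  simp (config := {decide := true}) [Matrix.det_succ_row_zero, Fin.sum_univ_succ, Fin.succAbove,
    (show (((0:Fin 5)):ℕ) = 0 from rfl), (show (((1:Fin 5)):ℕ) = 1 from rfl),
    (show (((2:Fin 5)):ℕ) = 2 from rfl), (show (((3:Fin 5)):ℕ) = 3 from rfl)]
  ring

lemma cofP01 (J : Fin 6 → ℝ) : cof J 0 1 = (J 2)^2*(J 5)^2 + (-1)*(J 2)^2*(J 4)^2 + (-1)*(J 1)^2*(J 5)^2 + (J 1)^2*(J 4)^2 + (J 0)^2*(J 5)^2 + (J 0)^2*(J 4)^2 + (-2)*(J 0)^2*(J 3)^2 + (J 0)^2*(J 2)^2 + (J 0)^2*(J 1)^2 + (-1)*(J 0)^(4) := by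
  have h : (cayley J).submatrix ((0:Fin 5).succAbove) ((1:Fin 5).succAbove) =
      !![(J 3)^2, (J 2)^2, (J 1)^2, 1; (J 4)^2, 0, (J 0)^2, 1; (J 5)^2, (J 0)^2, 0, 1; 1, 1, 1, 0] := by
    ext i j
    fin_cases i <;> fin_cases j <;> rfl
  rw [cof, h]
  simp (config := {decide := true}) [Matrix.det_succ_row_zero, Fin.sum_univ_succ, Fin.succAbove,
    (show (((0:Fin 5)):ℕ) = 0 from rfl), (show (((1:Fin 5)):ℕ) = 1 from rfl),
    (show (((2:Fin 5)):ℕ) = 2 from rfl), (show (((3:Fin 5)):ℕ) = 3 from rfl)]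
  ring

lemma cofP03 (J : Fin 6 → ℝ) : cof J 0 3 = (-2)*(J 2)^2*(J 5)^2 + (J 2)^2*(J 4)^2 + (J 2)^2*(J 3)^2 + (-1)*(J 2)^(4) + (J 1)^2*(J 4)^2 + (-1)*(J 1)^2*(J 3)^2 + (J 1)^2*(J 2)^2 + (-1)*(J 0)^2*(J 4)^2 + (J 0)^2*(J 3)^2 + (J 0)^2*(J 2)^2 := by
  have h : (cayley J).submatrix ((0:Fin 5).succAbove) ((3:Fin 5).succAbove) =
      !![(J 3)^2, 0, (J 2)^2, 1; (J 4)^2, (J 2)^2, 0, 1; (J 5)^2, (J 1)^2, (J 0)^2, 1; 1, 1, 1, 0] := by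
    ext i j
    fin_cases i <;> fin_cases j <;> rfl
  rw [cof, h]
  simp (config := {decide := true}) [Matrix.det_succ_row_zero, Fin.sum_univ_succ, Fin.succAbove,
    (show (((0:Fin 5)):ℕ) = 0 from rfl), (show (((1:Fin 5)):ℕ) = 1 from rfl),
    (show (((2:Fin 5)):ℕ) = 2 from rfl), (show (((3:Fin 5)):ℕ) = 3 from rfl)]
  ring

lemma cofP13 (J : Fin 6 → ℝ) : cof J 1 3 = (J 4)^2*(J 5)^2 + (-1)*(J 4)^(4) + (-1)*(J 3)^2*(J 5)^2 + (J 3)^2*(J 4)^2 + (J 2)^2*(J 5)^2 + (J 2)^2*(J 4)^2 + (-2)*(J 1)^2*(J 4)^2 + (J 0)^2*(J 4)^2 + (J 0)^2*(J 3)^2 + (-1)*(J 0)^2*(J 2)^2 := by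
  have h : (cayley J).submatrix ((1:Fin 5).succAbove) ((3:Fin 5).succAbove) =
      !![0, (J 3)^2, (J 4)^2, 1; (J 4)^2, (J 2)^2, 0, 1; (J 5)^2, (J 1)^2, (J 0)^2, 1; 1, 1, 1, 0] := by
    ext i j
    fin_cases i <;> fin_cases j <;> rfl
  rw [cof, h]
  simp (config := {decide := true}) [Matrix.det_succ_row_zero, Fin.sum_univ_succ, Fin.succAbove,
    (show (((0:Fin 5)):ℕ) = 0 from rfl), (show (((1:Fin 5)):ℕ) = 1 from rfl),
    (show (((2:Fin 5)):ℕ) = 2 from rfl), (show (((3:Fin 5)):ℕ) = 3 from rfl)]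
  ring

lemma cofP12 (J : Fin 6 → ℝ) : cof J 1 2 = (-1)*(J 5)^(4) + (J 4)^2*(J 5)^2 + (J 3)^2*(J 5)^2 + (-1)*(J 3)^2*(J 4)^2 + (-2)*(J 2)^2*(J 5)^2 + (J 1)^2*(J 5)^2 + (J 1)^2*(J 4)^2 + (J 0)^2*(J 5)^2 + (J 0)^2*(J 3)^2 + (-1)*(J 0)^2*(J 1)^2 := by
  have h : (cayley J).submatrix ((1:Fin 5).succAbove) ((2:Fin 5).succAbove) =
      !![0, (J 3)^2, (J 5)^2, 1; (J 4)^2, (J 2)^2, (J 0)^2, 1; (J 5)^2, (J 1)^2, 0, 1; 1, 1, 1, 0] := by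
    ext i j
    fin_cases i <;> fin_cases j <;> rfl
  rw [cof, h]
  simp (config := {decide := true}) [Matrix.det_succ_row_zero, Fin.sum_univ_succ, Fin.succAbove,
    (show (((0:Fin 5)):ℕ) = 0 from rfl), (show (((1:Fin 5)):ℕ) = 1 from rfl),
    (show (((2:Fin 5)):ℕ) = 2 from rfl), (show (((3:Fin 5)):ℕ) = 3 from rfl)]
  ring

lemma cofP23 (J : Fin 6 → ℝ) : cof J 2 3 = (-1)*(J 4)^2*(J 5)^2 + (J 3)^2*(J 5)^2 + (J 3)^2*(J 4)^2 + (-1)*(J 3)^(4) + (J 2)^2*(J 5)^2 + (J 2)^2*(J 3)^2 + (J 1)^2*(J 4)^2 + (J 1)^2*(J 3)^2 + (-1)*(J 1)^2*(J 2)^2 + (-2)*(J 0)^2*(J 3)^2 := by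
  have h : (cayley J).submatrix ((2:Fin 5).succAbove) ((3:Fin 5).succAbove) =
      !![0, (J 3)^2, (J 4)^2, 1; (J 3)^2, 0, (J 2)^2, 1; (J 5)^2, (J 1)^2, (J 0)^2, 1; 1, 1, 1, 0] := by
    ext i j
    fin_cases i <;> fin_cases j <;> rfl
  rw [cof, h]
  simp (config := {decide := true}) [Matrix.det_succ_row_zero, Fin.sum_univ_succ, Fin.succAbove,
    (show (((0:Fin 5)):ℕ) = 0 from rfl), (show (((1:Fin 5)):ℕ) = 1 from rfl),
    (show (((2:Fin 5)):ℕ) = 2 from rfl), (show (((3:Fin 5)):ℕ) = 3 from rfl)]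
  ring

lemma I1_0 (J : Fin 6 → ℝ) : cof J 0 0 = -16 * Asq J 0 := by
  rw [cofP00]
  show _ = -16 * heron _ _ _
  unfold heron; ring

lemma I1_1 (J : Fin 6 → ℝ) : cof J 1 1 = -16 * Asq J 1 := by
  rw [cofP11]
  show _ = -16 * heron _ _ _
  unfold heron; ring

lemma I1_2 (J : Fin 6 → ℝ) : cof J 2 2 = -16 * Asq J 2 := by
  rw [cofP22]
  show _ = -16 * heron _ _ _
  unfold heron; ring

lemma I1_3 (J : Fin 6 → ℝ) : cof J 3 3 = -16 * Asq J 3 := by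
  rw [cofP33]
  show _ = -16 * heron _ _ _
  unfold heron; ring

lemma I2_01 (J : Fin 6 → ℝ) :
    cof J 0 0 * cof J 1 1 - (cof J 0 1)^2 = 2*(J 0)^2*(cayley J).det := by
  rw [cofP00, cofP11, cofP01, detP]; ring

lemma I2_03 (J : Fin 6 → ℝ) :
    cof J 0 0 * cof J 3 3 - (cof J 0 3)^2 = 2*(J 2)^2*(cayley J).det := by
  rw [cofP00, cofP33, cofP03, detP]; ring

lemma I2_13 (J : Fin 6 → ℝ) :
    cof J 1 1 * cof J 3 3 - (cof J 1 3)^2 = 2*(J 4)^2*(cayley J).det := by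
  rw [cofP11, cofP33, cofP13, detP]; ring

lemma I2_12 (J : Fin 6 → ℝ) :
    cof J 1 1 * cof J 2 2 - (cof J 1 2)^2 = 2*(J 5)^2*(cayley J).det := by
  rw [cofP11, cofP22, cofP12, detP]; ring

lemma I2_23 (J : Fin 6 → ℝ) :
    cof J 2 2 * cof J 3 3 - (cof J 2 3)^2 = 2*(J 3)^2*(cayley J).det := by
  rw [cofP22, cofP33, cofP23, detP]; ring

lemma I3_013 (J : Fin 6 → ℝ) :
    -cof J 0 1 * cof J 3 3 + cof J 0 3 * cof J 1 3
      = (cayley J).det * ((J 2)^2 + (J 4)^2 - (J 3)^2) := by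
  rw [cofP01, cofP33, cofP03, cofP13, detP]; ring

lemma I3_031 (J : Fin 6 → ℝ) :
    -cof J 0 3 * cof J 1 1 + cof J 0 1 * cof J 1 3
      = (cayley J).det * ((J 0)^2 + (J 4)^2 - (J 5)^2) := by
  rw [cofP03, cofP11, cofP01, cofP13, detP]; ring

lemma I3_130 (J : Fin 6 → ℝ) :
    -cof J 1 3 * cof J 0 0 + cof J 0 1 * cof J 0 3
      = (cayley J).det * ((J 0)^2 + (J 2)^2 - (J 1)^2) := by
  rw [cofP13, cofP00, cofP01, cofP03, detP]; ring

lemma I3_123 (J : Fin 6 → ℝ) :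
    -cof J 1 2 * cof J 3 3 + cof J 1 3 * cof J 2 3
      = (cayley J).det * ((J 4)^2 + (J 3)^2 - (J 2)^2) := by
  rw [cofP12, cofP33, cofP13, cofP23, detP]; ring

lemma I3_132 (J : Fin 6 → ℝ) :
    -cof J 1 3 * cof J 2 2 + cof J 1 2 * cof J 2 3
      = (cayley J).det * ((J 5)^2 + (J 3)^2 - (J 1)^2) := by
  rw [cofP13, cofP22, cofP12, cofP23, detP]; ring

lemma I3_231 (J : Fin 6 → ℝ) :
    -cof J 2 3 * cof J 1 1 + cof J 1 2 * cof J 1 3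
      = (cayley J).det * ((J 5)^2 + (J 4)^2 - (J 0)^2) := by
  rw [cofP23, cofP11, cofP12, cofP13, detP]; ring


lemma heron_neg (x y z : ℝ) (hx : 0 < x) (hy : 0 < y) (hz : 0 < z)
    (h : x + y + 1/2 ≤ z) : heron x y z < 0 := by
  have p1 : 0 < x + y + z := by linarith
  have p2 : 0 < -x + y + z := by linarith
  have p3 : 0 < x - y + z := by linarith
  have h5 : (x+y+z) * ((-x+y+z) * ((x-y+z) * (x+y-z))) < 0 := by
    apply mul_neg_of_pos_of_neg p1
    apply mul_neg_of_pos_of_neg p2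
    apply mul_neg_of_pos_of_neg p3
    linarith
  have e : heron x y z = 1/16 * ((x+y+z) * ((-x+y+z) * ((x-y+z) * (x+y-z)))) := by
    unfold heron; ring
  rw [e]; linarith

lemma xIcc (Crs N : ℝ) (hN : 0 < N) (h : Crs^2 < N^2) : -1 ≤ -Crs/N ∧ -Crs/N ≤ 1 := by
  have h1 : -N < Crs := by nlinarith
  have h2 : Crs < N := by nlinarith
  constructor
  · rw [le_div_iff₀ hN]; linarith
  · rw [div_le_one hN]; linarith

lemma side_core (u v w Crs Crt Cst D ja jb jc sr ss st : ℝ)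
    (hsr : 0 < sr) (hss : 0 < ss) (hst : 0 < st)
    (hD : 0 < D) (hja : 0 < ja) (hjb : 0 < jb)
    (hu : u = -Crs/(16*sr*ss)) (hv : v = -Crt/(16*sr*st)) (hw : w = -Cst/(16*ss*st))
    (hI3 : -Crs*(16*st^2) + Crt*Cst = D*(ja^2+jb^2-jc^2))
    (hI2a : (16*sr^2)*(16*st^2) - Crt^2 = 2*ja^2*D)
    (hI2b : (16*ss^2)*(16*st^2) - Cst^2 = 2*jb^2*D)
    (hgap : 2*ja*jb + jc^2 < ja^2 + jb^2) :
    Real.sqrt (1-v^2) * Real.sqrt (1-w^2) < u + v*w := by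
  obtain ⟨t, ht0, ht2⟩ : ∃ t : ℝ, 0 ≤ t ∧ t^2 = 2*D :=
    ⟨Real.sqrt (2*D), Real.sqrt_nonneg _, Real.sq_sqrt (by linarith)⟩
  have hrt : (0:ℝ) < 16*sr*st := by positivity
  have hstp : (0:ℝ) < 16*ss*st := by positivity
  have hrs : (0:ℝ) < 16*sr*ss := by positivity
  have e1 : 1 - v^2 = (ja*t/(16*sr*st))^2 := by
    have hN : (16*sr*st) ≠ 0 := ne_of_gt hrt
    rw [hv]
    field_simp
    linear_combination hI2a - ja^2*ht2
  have e2 : 1 - w^2 = (jb*t/(16*ss*st))^2 := by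
    have hN : (16*ss*st) ≠ 0 := ne_of_gt hstp
    rw [hw]
    field_simp
    linear_combination hI2b - jb^2*ht2
  have s1 : Real.sqrt (1-v^2) = ja*t/(16*sr*st) := by
    rw [e1, Real.sqrt_sq (by positivity)]
  have s2 : Real.sqrt (1-w^2) = jb*t/(16*ss*st) := by
    rw [e2, Real.sqrt_sq (by positivity)]
  rw [s1, s2, hu, hv, hw]
  have eL : ja*t/(16*sr*st) * (jb*t/(16*ss*st)) = (ja*jb*(2*D)) / ((16*sr*st)*((16*ss*st))) := by
    rw [div_mul_div_comm]
    congr 1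
    linear_combination ja*jb*ht2
  have eR : -Crs/(16*sr*ss) + (-Crt/(16*sr*st)) * (-Cst/(16*ss*st))
      = (-Crs*(16*st^2) + Crt*Cst) / ((16*sr*st)*((16*ss*st))) := by
    rw [div_mul_div_comm, div_add_div _ _ (ne_of_gt hrs) (by positivity)]
    rw [div_eq_div_iff (by positivity) (by positivity)]
    ring
  rw [eL, eR, hI3]
  apply (div_lt_div_iff_of_pos_right (by positivity)).mpr
  nlinarith [mul_lt_mul_of_pos_left hgap hD]

lemma sum_lt_pi (u v w : ℝ)
    (hu1 : -1 ≤ u) (hu2 : u ≤ 1) (hv1 : -1 ≤ v) (hv2 : v ≤ 1) (hw1 : -1 ≤ w) (hw2 : w ≤ 1)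
    (h1 : Real.sqrt (1-v^2) * Real.sqrt (1-w^2) < u + v*w)
    (h2 : Real.sqrt (1-u^2) * Real.sqrt (1-w^2) < v + u*w)
    (h3 : Real.sqrt (1-u^2) * Real.sqrt (1-v^2) < w + u*v) :
    Real.arccos u + Real.arccos v + Real.arccos w < π := by
  set A := Real.arccos u with hA
  set B := Real.arccos v with hB
  set C := Real.arccos w with hC
  have hA0 : 0 ≤ A := Real.arccos_nonneg u
  have hApi : A ≤ π := Real.arccos_le_pi u
  have hB0 : 0 ≤ B := Real.arccos_nonneg v
  have hBpi : B ≤ π := Real.arccos_le_pi v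
  have hC0 : 0 ≤ C := Real.arccos_nonneg w
  have hCpi : C ≤ π := Real.arccos_le_pi w
  have hcu : Real.cos A = u := Real.cos_arccos hu1 hu2
  have hcv : Real.cos B = v := Real.cos_arccos hv1 hv2
  have hcw : Real.cos C = w := Real.cos_arccos hw1 hw2
  have hsu : Real.sin A = Real.sqrt (1 - u^2) := by rw [hA, Real.sin_arccos]
  have hsv : Real.sin B = Real.sqrt (1 - v^2) := by rw [hB, Real.sin_arccos]
  have hsw : Real.sin C = Real.sqrt (1 - w^2) := by rw [hC, Real.sin_arccos]
  by_cases h : A + B ≤ π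
  · have hkey : Real.cos (π - (A+B)) < Real.cos C := by
      rw [Real.cos_pi_sub, Real.cos_add, hcu, hcv, hsu, hsv, hcw]
      have := h3
      linarith
    have hmem1 : π - (A+B) ∈ Set.Icc 0 π := ⟨by linarith, by linarith⟩
    have hmem2 : C ∈ Set.Icc 0 π := ⟨hC0, hCpi⟩
    have := (Real.strictAntiOn_cos.lt_iff_gt hmem1 hmem2).mp hkey
    linarith
  · exfalso
    push_neg at h
    have hBc : Real.cos B ≤ -Real.cos A := by
      have h' : Real.cos B ≤ Real.cos (π - A) :=
        Real.cos_le_cos_of_nonneg_of_le_pi (by linarith) hBpi (by linarith)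
      rwa [Real.cos_pi_sub] at h'
    have huv : u + v ≤ 0 := by rw [← hcu, ← hcv]; linarith
    have hw1' : (0:ℝ) ≤ 1 + w := by linarith
    have hp : 0 ≤ -(u+v) * (1+w) := mul_nonneg (by linarith) hw1'
    nlinarith [mul_nonneg (Real.sqrt_nonneg (1-v^2)) (Real.sqrt_nonneg (1-w^2)),
      mul_nonneg (Real.sqrt_nonneg (1-u^2)) (Real.sqrt_nonneg (1-w^2))]

/-- For a timelike-faced Lorentzian tetrahedron with `V² > 0`, the interior
dihedral angles at the top vertex 1 and the bottom vertex 3 each sum to less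
than `π`: `θ̄′₁₂ + θ̄′₁₄ + θ̄′₂₄ < π` and `θ̄′₂₃ + θ̄′₂₄ + θ̄′₃₄ < π`. -/
theorem lorentzian_vertex_angle_sum_lt_pi (a' b' c' d' e' f' : ℝ) (J' : Fin 6 → ℝ)
    (hJ' : J' = ![a' + 1/2, b' + 1/2, c' + 1/2, d' + 1/2, e' + 1/2, f' + 1/2])
    (hpos' : ∀ i, 0 < J' i)
    (ht1' : AntiTri a' b' c') (ht2' : AntiTri c' d' e')
    (ht3' : AntiTri a' f' e') (ht4' : AntiTri b' d' f')
    (hV : 0 < (1/288) * (cayley J').det) :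
    thetaLint J' 0 1 + thetaLint J' 0 3 + thetaLint J' 1 3 < π ∧
    thetaLint J' 1 2 + thetaLint J' 1 3 + thetaLint J' 2 3 < π := by
  have hD : 0 < (cayley J').det := by linarith
  have e0 : J' 0 = a' + 1/2 := by rw [hJ']; rfl
  have e1 : J' 1 = b' + 1/2 := by rw [hJ']; rfl
  have e2 : J' 2 = c' + 1/2 := by rw [hJ']; rfl
  have e3 : J' 3 = d' + 1/2 := by rw [hJ']; rfl
  have e4 : J' 4 = e' + 1/2 := by rw [hJ']; rfl
  have e5 : J' 5 = f' + 1/2 := by rw [hJ']; rfl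
  have g1 : J' 0 + J' 1 + 1/2 ≤ J' 2 := by rw [e0, e1, e2]; have := ht1'.1; linarith
  have g2 : J' 2 + J' 3 + 1/2 ≤ J' 4 := by rw [e2, e3, e4]; have := ht2'.1; linarith
  have g3 : J' 0 + J' 5 + 1/2 ≤ J' 4 := by rw [e0, e5, e4]; have := ht3'.1; linarith
  have g4 : J' 1 + J' 3 + 1/2 ≤ J' 5 := by rw [e1, e3, e5]; have := ht4'.1; linarith
  have gpS1 : 2*(J' 2)*(J' 4) + (J' 3)^2 < (J' 2)^2 + (J' 4)^2 := by
    nlinarith [g2, hpos' 2, hpos' 4, hpos' 3]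
  have gpS2 : 2*(J' 0)*(J' 4) + (J' 5)^2 < (J' 0)^2 + (J' 4)^2 := by
    nlinarith [g3, hpos' 0, hpos' 4, hpos' 5]
  have gpS3 : 2*(J' 0)*(J' 2) + (J' 1)^2 < (J' 0)^2 + (J' 2)^2 := by
    nlinarith [g1, hpos' 0, hpos' 2, hpos' 1]
  have gpS4 : 2*(J' 4)*(J' 3) + (J' 2)^2 < (J' 4)^2 + (J' 3)^2 := by
    nlinarith [g2, hpos' 4, hpos' 3, hpos' 2]
  have gpS5 : 2*(J' 5)*(J' 3) + (J' 1)^2 < (J' 5)^2 + (J' 3)^2 := by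
    nlinarith [g4, hpos' 5, hpos' 3, hpos' 1]
  have gpS6 : 2*(J' 5)*(J' 4) + (J' 0)^2 < (J' 5)^2 + (J' 4)^2 := by
    nlinarith [g3, hpos' 5, hpos' 4, hpos' 0]
  have hA0 : Asq J' 0 < 0 := by
    have h' : Asq J' 0 = heron (J' 0) (J' 1) (J' 2) := rfl
    rw [h']; exact heron_neg _ _ _ (hpos' 0) (hpos' 1) (hpos' 2) g1
  have hA1 : Asq J' 1 < 0 := by
    have h' : Asq J' 1 = heron (J' 0) (J' 5) (J' 4) := by
      show heron (J' 0) (J' 4) (J' 5) = _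
      unfold heron; ring
    rw [h']; exact heron_neg _ _ _ (hpos' 0) (hpos' 5) (hpos' 4) g3
  have hA2 : Asq J' 2 < 0 := by
    have h' : Asq J' 2 = heron (J' 1) (J' 3) (J' 5) := rfl
    rw [h']; exact heron_neg _ _ _ (hpos' 1) (hpos' 3) (hpos' 5) g4
  have hA3 : Asq J' 3 < 0 := by
    have h' : Asq J' 3 = heron (J' 2) (J' 3) (J' 4) := rfl
    rw [h']; exact heron_neg _ _ _ (hpos' 2) (hpos' 3) (hpos' 4) g2
  have hs0 : 0 < Real.sqrt (-(Asq J' 0)) := Real.sqrt_pos.mpr (by linarith)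
  have q0 : (16:ℝ) * (Real.sqrt (-(Asq J' 0)))^2 = cof J' 0 0 := by
    rw [Real.sq_sqrt (by linarith : (0:ℝ) ≤ -(Asq J' 0)), I1_0 J']; ring
  have hs1 : 0 < Real.sqrt (-(Asq J' 1)) := Real.sqrt_pos.mpr (by linarith)
  have q1 : (16:ℝ) * (Real.sqrt (-(Asq J' 1)))^2 = cof J' 1 1 := by
    rw [Real.sq_sqrt (by linarith : (0:ℝ) ≤ -(Asq J' 1)), I1_1 J']; ring
  have hs2 : 0 < Real.sqrt (-(Asq J' 2)) := Real.sqrt_pos.mpr (by linarith)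
  have q2 : (16:ℝ) * (Real.sqrt (-(Asq J' 2)))^2 = cof J' 2 2 := by
    rw [Real.sq_sqrt (by linarith : (0:ℝ) ≤ -(Asq J' 2)), I1_2 J']; ring
  have hs3 : 0 < Real.sqrt (-(Asq J' 3)) := Real.sqrt_pos.mpr (by linarith)
  have q3 : (16:ℝ) * (Real.sqrt (-(Asq J' 3)))^2 = cof J' 3 3 := by
    rw [Real.sq_sqrt (by linarith : (0:ℝ) ≤ -(Asq J' 3)), I1_3 J']; ring
  have hb01 : (cof J' 0 1)^2 < (16 * Real.sqrt (-(Asq J' 0)) * Real.sqrt (-(Asq J' 1)))^2 := by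
    have e : (16 * Real.sqrt (-(Asq J' 0)) * Real.sqrt (-(Asq J' 1)))^2 = cof J' 0 0 * cof J' 1 1 := by
      rw [← q0, ← q1]; ring
    rw [e]
    linarith [I2_01 J', mul_pos (pow_pos (hpos' 0) 2) hD]
  have xb01 := xIcc (cof J' 0 1) (16 * Real.sqrt (-(Asq J' 0)) * Real.sqrt (-(Asq J' 1))) (by positivity) hb01
  have hb03 : (cof J' 0 3)^2 < (16 * Real.sqrt (-(Asq J' 0)) * Real.sqrt (-(Asq J' 3)))^2 := by
    have e : (16 * Real.sqrt (-(Asq J' 0)) * Real.sqrt (-(Asq J' 3)))^2 = cof J' 0 0 * cof J' 3 3 := by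
      rw [← q0, ← q3]; ring
    rw [e]
    linarith [I2_03 J', mul_pos (pow_pos (hpos' 2) 2) hD]
  have xb03 := xIcc (cof J' 0 3) (16 * Real.sqrt (-(Asq J' 0)) * Real.sqrt (-(Asq J' 3))) (by positivity) hb03
  have hb13 : (cof J' 1 3)^2 < (16 * Real.sqrt (-(Asq J' 1)) * Real.sqrt (-(Asq J' 3)))^2 := by
    have e : (16 * Real.sqrt (-(Asq J' 1)) * Real.sqrt (-(Asq J' 3)))^2 = cof J' 1 1 * cof J' 3 3 := by
      rw [← q1, ← q3]; ring
    rw [e]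
    linarith [I2_13 J', mul_pos (pow_pos (hpos' 4) 2) hD]
  have xb13 := xIcc (cof J' 1 3) (16 * Real.sqrt (-(Asq J' 1)) * Real.sqrt (-(Asq J' 3))) (by positivity) hb13
  have hb12 : (cof J' 1 2)^2 < (16 * Real.sqrt (-(Asq J' 1)) * Real.sqrt (-(Asq J' 2)))^2 := by
    have e : (16 * Real.sqrt (-(Asq J' 1)) * Real.sqrt (-(Asq J' 2)))^2 = cof J' 1 1 * cof J' 2 2 := by
      rw [← q1, ← q2]; ring
    rw [e]
    linarith [I2_12 J', mul_pos (pow_pos (hpos' 5) 2) hD]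
  have xb12 := xIcc (cof J' 1 2) (16 * Real.sqrt (-(Asq J' 1)) * Real.sqrt (-(Asq J' 2))) (by positivity) hb12
  have hb23 : (cof J' 2 3)^2 < (16 * Real.sqrt (-(Asq J' 2)) * Real.sqrt (-(Asq J' 3)))^2 := by
    have e : (16 * Real.sqrt (-(Asq J' 2)) * Real.sqrt (-(Asq J' 3)))^2 = cof J' 2 2 * cof J' 3 3 := by
      rw [← q2, ← q3]; ring
    rw [e]
    linarith [I2_23 J', mul_pos (pow_pos (hpos' 3) 2) hD]
  have xb23 := xIcc (cof J' 2 3) (16 * Real.sqrt (-(Asq J' 2)) * Real.sqrt (-(Asq J' 3))) (by positivity) hb23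
  have S1 : Real.sqrt (1 - (-(cof J' 0 3) / (16 * Real.sqrt (-(Asq J' 0)) * Real.sqrt (-(Asq J' 3))))^2) * Real.sqrt (1 - (-(cof J' 1 3) / (16 * Real.sqrt (-(Asq J' 1)) * Real.sqrt (-(Asq J' 3))))^2)
      < (-(cof J' 0 1) / (16 * Real.sqrt (-(Asq J' 0)) * Real.sqrt (-(Asq J' 1)))) + (-(cof J' 0 3) / (16 * Real.sqrt (-(Asq J' 0)) * Real.sqrt (-(Asq J' 3)))) * (-(cof J' 1 3) / (16 * Real.sqrt (-(Asq J' 1)) * Real.sqrt (-(Asq J' 3)))) := by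
    have i3 : -(cof J' 0 1) * ((16:ℝ) * (Real.sqrt (-(Asq J' 3)))^2) + (cof J' 0 3) * (cof J' 1 3)
        = (cayley J').det * ((J' 2)^2 + (J' 4)^2 - (J' 3)^2) := by
      rw [q3]; exact I3_013 J'
    have i2a : ((16:ℝ) * (Real.sqrt (-(Asq J' 0)))^2) * ((16:ℝ) * (Real.sqrt (-(Asq J' 3)))^2) - (cof J' 0 3)^2
        = 2*(J' 2)^2*(cayley J').det := by
      rw [q0, q3]; exact I2_03 J'
    have i2b : ((16:ℝ) * (Real.sqrt (-(Asq J' 1)))^2) * ((16:ℝ) * (Real.sqrt (-(Asq J' 3)))^2) - (cof J' 1 3)^2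
        = 2*(J' 4)^2*(cayley J').det := by
      rw [q1, q3]; exact I2_13 J'
    exact side_core (-(cof J' 0 1) / (16 * Real.sqrt (-(Asq J' 0)) * Real.sqrt (-(Asq J' 1)))) (-(cof J' 0 3) / (16 * Real.sqrt (-(Asq J' 0)) * Real.sqrt (-(Asq J' 3)))) (-(cof J' 1 3) / (16 * Real.sqrt (-(Asq J' 1)) * Real.sqrt (-(Asq J' 3)))) (cof J' 0 1) (cof J' 0 3) (cof J' 1 3) (cayley J').det
      (J' 2) (J' 4) (J' 3) (Real.sqrt (-(Asq J' 0))) (Real.sqrt (-(Asq J' 1))) (Real.sqrt (-(Asq J' 3)))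
      hs0 hs1 hs3 hD (hpos' 2) (hpos' 4) (by ring) (by ring) (by ring) i3 i2a i2b gpS1
  have S2 : Real.sqrt (1 - (-(cof J' 0 1) / (16 * Real.sqrt (-(Asq J' 0)) * Real.sqrt (-(Asq J' 1))))^2) * Real.sqrt (1 - (-(cof J' 1 3) / (16 * Real.sqrt (-(Asq J' 1)) * Real.sqrt (-(Asq J' 3))))^2)
      < (-(cof J' 0 3) / (16 * Real.sqrt (-(Asq J' 0)) * Real.sqrt (-(Asq J' 3)))) + (-(cof J' 0 1) / (16 * Real.sqrt (-(Asq J' 0)) * Real.sqrt (-(Asq J' 1)))) * (-(cof J' 1 3) / (16 * Real.sqrt (-(Asq J' 1)) * Real.sqrt (-(Asq J' 3)))) := by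
    have i3 : -(cof J' 0 3) * ((16:ℝ) * (Real.sqrt (-(Asq J' 1)))^2) + (cof J' 0 1) * (cof J' 1 3)
        = (cayley J').det * ((J' 0)^2 + (J' 4)^2 - (J' 5)^2) := by
      rw [q1]; exact I3_031 J'
    have i2a : ((16:ℝ) * (Real.sqrt (-(Asq J' 0)))^2) * ((16:ℝ) * (Real.sqrt (-(Asq J' 1)))^2) - (cof J' 0 1)^2
        = 2*(J' 0)^2*(cayley J').det := by
      rw [q0, q1]; exact I2_01 J'
    have i2b : ((16:ℝ) * (Real.sqrt (-(Asq J' 3)))^2) * ((16:ℝ) * (Real.sqrt (-(Asq J' 1)))^2) - (cof J' 1 3)^2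
        = 2*(J' 4)^2*(cayley J').det := by
      rw [q3, q1]; linear_combination I2_13 J'
    exact side_core (-(cof J' 0 3) / (16 * Real.sqrt (-(Asq J' 0)) * Real.sqrt (-(Asq J' 3)))) (-(cof J' 0 1) / (16 * Real.sqrt (-(Asq J' 0)) * Real.sqrt (-(Asq J' 1)))) (-(cof J' 1 3) / (16 * Real.sqrt (-(Asq J' 1)) * Real.sqrt (-(Asq J' 3)))) (cof J' 0 3) (cof J' 0 1) (cof J' 1 3) (cayley J').det
      (J' 0) (J' 4) (J' 5) (Real.sqrt (-(Asq J' 0))) (Real.sqrt (-(Asq J' 3))) (Real.sqrt (-(Asq J' 1)))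
      hs0 hs3 hs1 hD (hpos' 0) (hpos' 4) (by ring) (by ring) (by ring) i3 i2a i2b gpS2
  have S3 : Real.sqrt (1 - (-(cof J' 0 1) / (16 * Real.sqrt (-(Asq J' 0)) * Real.sqrt (-(Asq J' 1))))^2) * Real.sqrt (1 - (-(cof J' 0 3) / (16 * Real.sqrt (-(Asq J' 0)) * Real.sqrt (-(Asq J' 3))))^2)
      < (-(cof J' 1 3) / (16 * Real.sqrt (-(Asq J' 1)) * Real.sqrt (-(Asq J' 3)))) + (-(cof J' 0 1) / (16 * Real.sqrt (-(Asq J' 0)) * Real.sqrt (-(Asq J' 1)))) * (-(cof J' 0 3) / (16 * Real.sqrt (-(Asq J' 0)) * Real.sqrt (-(Asq J' 3)))) := by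
    have i3 : -(cof J' 1 3) * ((16:ℝ) * (Real.sqrt (-(Asq J' 0)))^2) + (cof J' 0 1) * (cof J' 0 3)
        = (cayley J').det * ((J' 0)^2 + (J' 2)^2 - (J' 1)^2) := by
      rw [q0]; exact I3_130 J'
    have i2a : ((16:ℝ) * (Real.sqrt (-(Asq J' 1)))^2) * ((16:ℝ) * (Real.sqrt (-(Asq J' 0)))^2) - (cof J' 0 1)^2
        = 2*(J' 0)^2*(cayley J').det := by
      rw [q1, q0]; linear_combination I2_01 J'
    have i2b : ((16:ℝ) * (Real.sqrt (-(Asq J' 3)))^2) * ((16:ℝ) * (Real.sqrt (-(Asq J' 0)))^2) - (cof J' 0 3)^2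
        = 2*(J' 2)^2*(cayley J').det := by
      rw [q3, q0]; linear_combination I2_03 J'
    exact side_core (-(cof J' 1 3) / (16 * Real.sqrt (-(Asq J' 1)) * Real.sqrt (-(Asq J' 3)))) (-(cof J' 0 1) / (16 * Real.sqrt (-(Asq J' 0)) * Real.sqrt (-(Asq J' 1)))) (-(cof J' 0 3) / (16 * Real.sqrt (-(Asq J' 0)) * Real.sqrt (-(Asq J' 3)))) (cof J' 1 3) (cof J' 0 1) (cof J' 0 3) (cayley J').det
      (J' 0) (J' 2) (J' 1) (Real.sqrt (-(Asq J' 1))) (Real.sqrt (-(Asq J' 3))) (Real.sqrt (-(Asq J' 0)))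
      hs1 hs3 hs0 hD (hpos' 0) (hpos' 2) (by ring) (by ring) (by ring) i3 i2a i2b gpS3
  have S4 : Real.sqrt (1 - (-(cof J' 1 3) / (16 * Real.sqrt (-(Asq J' 1)) * Real.sqrt (-(Asq J' 3))))^2) * Real.sqrt (1 - (-(cof J' 2 3) / (16 * Real.sqrt (-(Asq J' 2)) * Real.sqrt (-(Asq J' 3))))^2)
      < (-(cof J' 1 2) / (16 * Real.sqrt (-(Asq J' 1)) * Real.sqrt (-(Asq J' 2)))) + (-(cof J' 1 3) / (16 * Real.sqrt (-(Asq J' 1)) * Real.sqrt (-(Asq J' 3)))) * (-(cof J' 2 3) / (16 * Real.sqrt (-(Asq J' 2)) * Real.sqrt (-(Asq J' 3)))) := by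
    have i3 : -(cof J' 1 2) * ((16:ℝ) * (Real.sqrt (-(Asq J' 3)))^2) + (cof J' 1 3) * (cof J' 2 3)
        = (cayley J').det * ((J' 4)^2 + (J' 3)^2 - (J' 2)^2) := by
      rw [q3]; exact I3_123 J'
    have i2a : ((16:ℝ) * (Real.sqrt (-(Asq J' 1)))^2) * ((16:ℝ) * (Real.sqrt (-(Asq J' 3)))^2) - (cof J' 1 3)^2
        = 2*(J' 4)^2*(cayley J').det := by
      rw [q1, q3]; exact I2_13 J'
    have i2b : ((16:ℝ) * (Real.sqrt (-(Asq J' 2)))^2) * ((16:ℝ) * (Real.sqrt (-(Asq J' 3)))^2) - (cof J' 2 3)^2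
        = 2*(J' 3)^2*(cayley J').det := by
      rw [q2, q3]; exact I2_23 J'
    exact side_core (-(cof J' 1 2) / (16 * Real.sqrt (-(Asq J' 1)) * Real.sqrt (-(Asq J' 2)))) (-(cof J' 1 3) / (16 * Real.sqrt (-(Asq J' 1)) * Real.sqrt (-(Asq J' 3)))) (-(cof J' 2 3) / (16 * Real.sqrt (-(Asq J' 2)) * Real.sqrt (-(Asq J' 3)))) (cof J' 1 2) (cof J' 1 3) (cof J' 2 3) (cayley J').det
      (J' 4) (J' 3) (J' 2) (Real.sqrt (-(Asq J' 1))) (Real.sqrt (-(Asq J' 2))) (Real.sqrt (-(Asq J' 3)))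
      hs1 hs2 hs3 hD (hpos' 4) (hpos' 3) (by ring) (by ring) (by ring) i3 i2a i2b gpS4
  have S5 : Real.sqrt (1 - (-(cof J' 1 2) / (16 * Real.sqrt (-(Asq J' 1)) * Real.sqrt (-(Asq J' 2))))^2) * Real.sqrt (1 - (-(cof J' 2 3) / (16 * Real.sqrt (-(Asq J' 2)) * Real.sqrt (-(Asq J' 3))))^2)
      < (-(cof J' 1 3) / (16 * Real.sqrt (-(Asq J' 1)) * Real.sqrt (-(Asq J' 3)))) + (-(cof J' 1 2) / (16 * Real.sqrt (-(Asq J' 1)) * Real.sqrt (-(Asq J' 2)))) * (-(cof J' 2 3) / (16 * Real.sqrt (-(Asq J' 2)) * Real.sqrt (-(Asq J' 3)))) := by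
    have i3 : -(cof J' 1 3) * ((16:ℝ) * (Real.sqrt (-(Asq J' 2)))^2) + (cof J' 1 2) * (cof J' 2 3)
        = (cayley J').det * ((J' 5)^2 + (J' 3)^2 - (J' 1)^2) := by
      rw [q2]; exact I3_132 J'
    have i2a : ((16:ℝ) * (Real.sqrt (-(Asq J' 1)))^2) * ((16:ℝ) * (Real.sqrt (-(Asq J' 2)))^2) - (cof J' 1 2)^2
        = 2*(J' 5)^2*(cayley J').det := by
      rw [q1, q2]; exact I2_12 J'
    have i2b : ((16:ℝ) * (Real.sqrt (-(Asq J' 3)))^2) * ((16:ℝ) * (Real.sqrt (-(Asq J' 2)))^2) - (cof J' 2 3)^2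
        = 2*(J' 3)^2*(cayley J').det := by
      rw [q3, q2]; linear_combination I2_23 J'
    exact side_core (-(cof J' 1 3) / (16 * Real.sqrt (-(Asq J' 1)) * Real.sqrt (-(Asq J' 3)))) (-(cof J' 1 2) / (16 * Real.sqrt (-(Asq J' 1)) * Real.sqrt (-(Asq J' 2)))) (-(cof J' 2 3) / (16 * Real.sqrt (-(Asq J' 2)) * Real.sqrt (-(Asq J' 3)))) (cof J' 1 3) (cof J' 1 2) (cof J' 2 3) (cayley J').det
      (J' 5) (J' 3) (J' 1) (Real.sqrt (-(Asq J' 1))) (Real.sqrt (-(Asq J' 3))) (Real.sqrt (-(Asq J' 2)))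
      hs1 hs3 hs2 hD (hpos' 5) (hpos' 3) (by ring) (by ring) (by ring) i3 i2a i2b gpS5
  have S6 : Real.sqrt (1 - (-(cof J' 1 2) / (16 * Real.sqrt (-(Asq J' 1)) * Real.sqrt (-(Asq J' 2))))^2) * Real.sqrt (1 - (-(cof J' 1 3) / (16 * Real.sqrt (-(Asq J' 1)) * Real.sqrt (-(Asq J' 3))))^2)
      < (-(cof J' 2 3) / (16 * Real.sqrt (-(Asq J' 2)) * Real.sqrt (-(Asq J' 3)))) + (-(cof J' 1 2) / (16 * Real.sqrt (-(Asq J' 1)) * Real.sqrt (-(Asq J' 2)))) * (-(cof J' 1 3) / (16 * Real.sqrt (-(Asq J' 1)) * Real.sqrt (-(Asq J' 3)))) := by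
    have i3 : -(cof J' 2 3) * ((16:ℝ) * (Real.sqrt (-(Asq J' 1)))^2) + (cof J' 1 2) * (cof J' 1 3)
        = (cayley J').det * ((J' 5)^2 + (J' 4)^2 - (J' 0)^2) := by
      rw [q1]; exact I3_231 J'
    have i2a : ((16:ℝ) * (Real.sqrt (-(Asq J' 2)))^2) * ((16:ℝ) * (Real.sqrt (-(Asq J' 1)))^2) - (cof J' 1 2)^2
        = 2*(J' 5)^2*(cayley J').det := by
      rw [q2, q1]; linear_combination I2_12 J'
    have i2b : ((16:ℝ) * (Real.sqrt (-(Asq J' 3)))^2) * ((16:ℝ) * (Real.sqrt (-(Asq J' 1)))^2) - (cof J' 1 3)^2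
        = 2*(J' 4)^2*(cayley J').det := by
      rw [q3, q1]; linear_combination I2_13 J'
    exact side_core (-(cof J' 2 3) / (16 * Real.sqrt (-(Asq J' 2)) * Real.sqrt (-(Asq J' 3)))) (-(cof J' 1 2) / (16 * Real.sqrt (-(Asq J' 1)) * Real.sqrt (-(Asq J' 2)))) (-(cof J' 1 3) / (16 * Real.sqrt (-(Asq J' 1)) * Real.sqrt (-(Asq J' 3)))) (cof J' 2 3) (cof J' 1 2) (cof J' 1 3) (cayley J').det
      (J' 5) (J' 4) (J' 0) (Real.sqrt (-(Asq J' 2))) (Real.sqrt (-(Asq J' 3))) (Real.sqrt (-(Asq J' 1)))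
      hs2 hs3 hs1 hD (hpos' 5) (hpos' 4) (by ring) (by ring) (by ring) i3 i2a i2b gpS6
  constructor
  · show Real.arccos (-(cof J' 0 1) / (16 * Real.sqrt (-(Asq J' 0)) * Real.sqrt (-(Asq J' 1)))) + Real.arccos (-(cof J' 0 3) / (16 * Real.sqrt (-(Asq J' 0)) * Real.sqrt (-(Asq J' 3)))) + Real.arccos (-(cof J' 1 3) / (16 * Real.sqrt (-(Asq J' 1)) * Real.sqrt (-(Asq J' 3)))) < π
    exact sum_lt_pi _ _ _ xb01.1 xb01.2 xb03.1 xb03.2 xb13.1 xb13.2 S1 S2 S3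
  · show Real.arccos (-(cof J' 1 2) / (16 * Real.sqrt (-(Asq J' 1)) * Real.sqrt (-(Asq J' 2)))) + Real.arccos (-(cof J' 1 3) / (16 * Real.sqrt (-(Asq J' 1)) * Real.sqrt (-(Asq J' 3)))) + Real.arccos (-(cof J' 2 3) / (16 * Real.sqrt (-(Asq J' 2)) * Real.sqrt (-(Asq J' 3)))) < π
    exact sum_lt_pi _ _ _ xb12.1 xb12.2 xb13.1 xb13.2 xb23.1 xb23.2 S4 S5 S6
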